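/- Fix 0 < q < 1 and λ > 0, and set θ_n = λ / [n − λ]_q where [x]_q = (1 − q^x)/(1 − q). Then for every fixed integer x ≥ 0, the Kemp q-binomial probability P(X_n = x) for X_n ∼ KB(n, θ_n, q) converges as n → ∞ to the Heine probability with parameter (1−q)λ, i.e. [n choose x]_q · θ_n^x · q^{x(x−1)/2} / ∏_{i=0}^{n−1}(1 + θ_n q^i) → q^{x(x−1)/2} ((1−q)λ)^x / (q;q)_x · e_q(−(1−q)λ). -/

import Mathlib

open Filter Finset

/-- The q-shifted factorial `(z;q)_n = ∏_{i=0}^{n-1} (1 - z q^i)`. -/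
noncomputable def qPoch (q z : ℝ) (n : ℕ) : ℝ := ∏ i ∈ range n, (1 - z * q ^ i)

/-- The q-binomial coefficient `[n choose k]_q = (q;q)_n / ((q;q)_k (q;q)_{n-k})`. -/
noncomputable def qBinom (q : ℝ) (n k : ℕ) : ℝ := qPoch q q n / (qPoch q q k * qPoch q q (n - k))

/-- The q-exponential `e_q(z) = 1/(z;q)_∞`. -/
noncomputable def qExp (q z : ℝ) : ℝ := (∏' i : ℕ, (1 - z * q ^ i))⁻¹

section Aux

variable {q lam : ℝ}

lemma qPoch_pos (hq0 : 0 < q) (hq1 : q < 1) (n : ℕ) : 0 < qPoch q q n := by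
  refine Finset.prod_pos fun i _ => ?_
  have h1 : q * q ^ i < 1 := by
    calc q * q ^ i ≤ q * 1 := by
          exact mul_le_mul_of_nonneg_left (pow_le_one₀ hq0.le hq1.le) hq0.le
      _ = q := mul_one q
      _ < 1 := hq1
  linarith

lemma theta_tendsto (hq0 : 0 < q) (hq1 : q < 1) (θ : ℕ → ℝ)
    (hθ : ∀ n : ℕ, θ n = lam / ((1 - q ^ ((n : ℝ) - lam)) / (1 - q))) :
    Tendsto θ atTop (nhds ((1 - q) * lam)) := by
  have hpow : Tendsto (fun n : ℕ => q ^ ((n : ℝ) - lam)) atTop (nhds 0) := by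
    have h1 : Tendsto (fun y : ℝ => q ^ y) atTop (nhds 0) :=
      tendsto_rpow_atTop_of_base_lt_one q (by linarith) hq1
    have h2 : Tendsto (fun n : ℕ => (n : ℝ) - lam) atTop atTop := by
      simp only [sub_eq_add_neg]
      exact tendsto_atTop_add_const_right atTop (-lam) tendsto_natCast_atTop_atTop
    exact h1.comp h2
  have h3 : Tendsto (fun n : ℕ => lam / ((1 - q ^ ((n : ℝ) - lam)) / (1 - q))) atTop
      (nhds (lam / ((1 - 0) / (1 - q)))) := by
    refine tendsto_const_nhds.div (Tendsto.div_const (tendsto_const_nhds.sub hpow) _) ?_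
    have : (0:ℝ) < 1 - q := by linarith
    positivity
  have : lam / ((1 - (0:ℝ)) / (1 - q)) = (1 - q) * lam := by
    field_simp
    ring
  rw [this] at h3
  exact h3.congr fun n => (hθ n).symm

lemma theta_ge (hq0 : 0 < q) (hq1 : q < 1) (hlam : 0 < lam) (θ : ℕ → ℝ)
    (hθ : ∀ n : ℕ, θ n = lam / ((1 - q ^ ((n : ℝ) - lam)) / (1 - q))) :
    ∀ᶠ n : ℕ in atTop, (1 - q) * lam ≤ θ n := by
  filter_upwards [eventually_gt_atTop ⌈lam⌉₊] with n hn
  have hnl : lam < (n : ℝ) := lt_of_le_of_lt (Nat.le_ceil lam) (by exact_mod_cast hn)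
  set e := q ^ ((n : ℝ) - lam) with he
  have he0 : 0 < e := Real.rpow_pos_of_pos hq0 _
  have he1 : e < 1 := Real.rpow_lt_one hq0.le hq1 (by linarith)
  rw [hθ n, div_div_eq_mul_div]
  rw [le_div_iff₀ (by linarith)]
  nlinarith [mul_nonneg (mul_nonneg (by linarith : (0:ℝ) ≤ 1 - q) hlam.le) he0.le]

end Aux

/-- With `θ_n = λ / [n - λ]_q`, the Kemp q-binomial probability
`P(X_n = x)` converges, as `n → ∞`, to the Heine probability with parameter `(1-q)·λ`. -/
theorem kemp_to_heine_qNumber_param (q lam : ℝ) (hq0 : 0 < q) (hq1 : q < 1) (hlam : 0 < lam)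
    (θ : ℕ → ℝ) (hθ : ∀ n : ℕ, θ n = lam / ((1 - q ^ ((n : ℝ) - lam)) / (1 - q)))
    (x : ℕ) :
    Tendsto
      (fun n : ℕ =>
        qBinom q n x * θ n ^ x * q ^ (x * (x - 1) / 2) /
          ∏ i ∈ range n, (1 + θ n * q ^ i))
      atTop
      (nhds (q ^ (x * (x - 1) / 2) * ((1 - q) * lam) ^ x / qPoch q q x *
        qExp q (-((1 - q) * lam)))) := by
  set c : ℝ := (1 - q) * lam with hc
  have hc0 : 0 < c := by
    have : (0:ℝ) < 1 - q := by linarith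
    positivity
  have hq1' : (0:ℝ) < 1 - q := by linarith
  have hfac : ∀ i : ℕ, (0:ℝ) < 1 + c * q ^ i := fun i => by
    nlinarith [mul_pos hc0 (pow_pos hq0 i)]
  have hθt : Tendsto θ atTop (nhds c) := theta_tendsto hq0 hq1 θ hθ
  have hθge : ∀ᶠ n : ℕ in atTop, c ≤ θ n := theta_ge hq0 hq1 hlam θ hθ
  -- Multipliability of the limiting product
  have hM : Multipliable (fun i : ℕ => 1 + c * q ^ i) := by
    have hfn : ∀ (_ : Unit) (i : ℕ), 0 < 1 + c * q ^ i := fun _ i => hfac i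
    have hf : ∀ _ : Unit, Summable fun i : ℕ => Real.log (1 + c * q ^ i) := by
      intro _
      refine Summable.of_nonneg_of_le (fun i => Real.log_nonneg
        (by nlinarith [mul_pos hc0 (pow_pos hq0 i)])) ?_
        ((summable_geometric_of_lt_one hq0.le hq1).mul_left c)
      intro i
      have := Real.log_le_sub_one_of_pos (hfac i)
      linarith
    exact Real.multipliable_of_summable_log (hfn ()) (hf ())
  set P : ℝ := ∏' i : ℕ, (1 + c * q ^ i) with hPdef
  have hP : Tendsto (fun n : ℕ => ∏ i ∈ range n, (1 + c * q ^ i)) atTop (nhds P) :=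
    hM.hasProd.tendsto_prod_nat
  have hP1 : (1:ℝ) ≤ P := by
    refine ge_of_tendsto' hP fun n => ?_
    calc (1:ℝ) = ∏ _i ∈ range n, (1:ℝ) := by simp
      _ ≤ ∏ i ∈ range n, (1 + c * q ^ i) :=
        Finset.prod_le_prod (fun i _ => zero_le_one) fun i _ => by
          nlinarith [mul_pos hc0 (pow_pos hq0 i)]
  have hPne : P ≠ 0 := by linarith
  -- the denominator product tends to P
  have hD : Tendsto (fun n : ℕ => ∏ i ∈ range n, (1 + θ n * q ^ i)) atTop (nhds P) := by
    have hupper : Tendsto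
        (fun n : ℕ => (∏ i ∈ range n, (1 + c * q ^ i)) * Real.exp ((θ n - c) / (1 - q)))
        atTop (nhds P) := by
      have h0 : Tendsto (fun n : ℕ => (θ n - c) / (1 - q)) atTop (nhds 0) := by
        have h0' : Tendsto (fun n : ℕ => θ n - c) atTop (nhds (c - c)) :=
          hθt.sub (tendsto_const_nhds : Tendsto (fun _ : ℕ => c) atTop (nhds c))
        have := h0'.div_const (1 - q)
        simpa using this
      have hexp : Tendsto (fun n : ℕ => Real.exp ((θ n - c) / (1 - q))) atTop (nhds 1) := by
        have := (Real.continuous_exp.tendsto 0).comp h0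
        simpa [Function.comp_def] using this
      simpa using hP.mul hexp
    refine tendsto_of_tendsto_of_tendsto_of_le_of_le' hP hupper ?_ ?_
    · filter_upwards [hθge] with n hge
      refine Finset.prod_le_prod (fun i _ => (hfac i).le) fun i _ => ?_
      have h4 := pow_nonneg hq0.le i
      nlinarith
    · filter_upwards [hθge] with n hge
      have hθ0 : 0 ≤ θ n := le_trans hc0.le hge
      calc ∏ i ∈ range n, (1 + θ n * q ^ i)
          ≤ ∏ i ∈ range n, ((1 + c * q ^ i) * Real.exp ((θ n - c) * q ^ i)) := by
            refine Finset.prod_le_prod (fun i _ => by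
              nlinarith [mul_nonneg hθ0 (pow_nonneg hq0.le i)]) fun i _ => ?_
            have h1 : 1 + (θ n - c) * q ^ i ≤ Real.exp ((θ n - c) * q ^ i) := by
              linarith [Real.add_one_le_exp ((θ n - c) * q ^ i)]
            have h2 : (0:ℝ) < 1 + c * q ^ i := by positivity
            have h3 : 0 ≤ (θ n - c) * q ^ i :=
              mul_nonneg (by linarith) (pow_nonneg hq0.le i)
            nlinarith [mul_le_mul_of_nonneg_left h1 h2.le,
              mul_nonneg (mul_nonneg hc0.le (pow_nonneg hq0.le i)) h3]
        _ = (∏ i ∈ range n, (1 + c * q ^ i)) * Real.exp (∑ i ∈ range n, (θ n - c) * q ^ i) := by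
            rw [Finset.prod_mul_distrib, Real.exp_sum]
        _ ≤ (∏ i ∈ range n, (1 + c * q ^ i)) * Real.exp ((θ n - c) / (1 - q)) := by
            refine mul_le_mul_of_nonneg_left ?_
              (Finset.prod_nonneg fun i _ => (hfac i).le)
            rw [Real.exp_le_exp, ← Finset.mul_sum]
            have hsum : ∑ i ∈ range n, q ^ i = (1 - q ^ n) / (1 - q) := by
              rw [geom_sum_eq (ne_of_lt hq1) n]
              rw [div_eq_div_iff (by linarith) (by linarith)]
              ring
            have hsble : ∑ i ∈ range n, q ^ i ≤ 1 / (1 - q) := by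
              rw [hsum, div_le_div_iff₀ hq1' hq1']
              nlinarith [pow_nonneg hq0.le n]
            have hδ : 0 ≤ θ n - c := by linarith
            calc (θ n - c) * ∑ i ∈ range n, q ^ i ≤ (θ n - c) * (1 / (1 - q)) :=
                  mul_le_mul_of_nonneg_left hsble hδ
              _ = (θ n - c) / (1 - q) := by ring
  -- the q-binomial part
  have hQx : 0 < qPoch q q x := qPoch_pos hq0 hq1 x
  have hG : Tendsto (fun n : ℕ => ∏ j ∈ range x, (1 - q * q ^ (n - x + j))) atTop (nhds 1) := by
    have : Tendsto (fun n : ℕ => ∏ j ∈ range x, (1 - q * q ^ (n - x + j))) atTop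
        (nhds (∏ _j ∈ range x, (1:ℝ))) := by
      refine tendsto_finset_prod _ fun j _ => ?_
      have hpow : Tendsto (fun n : ℕ => q ^ (n - x + j)) atTop (nhds 0) := by
        refine (tendsto_pow_atTop_nhds_zero_of_lt_one hq0.le hq1).comp ?_
        refine tendsto_atTop_atTop.2 fun b => ⟨b + x, fun n hn => by omega⟩
      have h5 : Tendsto (fun n : ℕ => 1 - q * q ^ (n - x + j)) atTop (nhds (1 - q * 0)) :=
        Tendsto.sub (tendsto_const_nhds : Tendsto (fun _ : ℕ => (1:ℝ)) atTop (nhds 1))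
          (Tendsto.mul (tendsto_const_nhds : Tendsto (fun _ : ℕ => q) atTop (nhds q)) hpow)
      simpa using h5
    simpa using this
  -- eventual formula for qBinom
  have hBinomEq : ∀ n : ℕ, x ≤ n →
      qBinom q n x = (∏ j ∈ range x, (1 - q * q ^ (n - x + j))) / qPoch q q x := by
    intro n hxn
    have hsplit : qPoch q q n
        = qPoch q q (n - x) * ∏ j ∈ range x, (1 - q * q ^ (n - x + j)) := by
      unfold qPoch
      rw [← Finset.prod_range_add (fun i => (1 - q * q ^ i)) (n - x) x,
        Nat.sub_add_cancel hxn]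
    have hne : qPoch q q (n - x) ≠ 0 := (qPoch_pos hq0 hq1 _).ne'
    rw [qBinom, hsplit]
    field_simp
  -- assemble
  have hmain : Tendsto
      (fun n : ℕ => (∏ j ∈ range x, (1 - q * q ^ (n - x + j))) / qPoch q q x * θ n ^ x *
        q ^ (x * (x - 1) / 2) / ∏ i ∈ range n, (1 + θ n * q ^ i)) atTop
      (nhds ((1 / qPoch q q x * c ^ x * q ^ (x * (x - 1) / 2)) / P)) := by
    refine Tendsto.div ?_ hD hPne
    have h1 : Tendsto (fun n : ℕ => (∏ j ∈ range x, (1 - q * q ^ (n - x + j))) / qPoch q q x)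
        atTop (nhds (1 / qPoch q q x)) := hG.div_const _
    exact (h1.mul (hθt.pow x)).mul_const _
  have hval : (1 / qPoch q q x * c ^ x * q ^ (x * (x - 1) / 2)) / P
      = q ^ (x * (x - 1) / 2) * c ^ x / qPoch q q x * qExp q (-c) := by
    have hPeq : qExp q (-c) = P⁻¹ := by
      rw [qExp, hPdef]
      congr 1
      exact tprod_congr fun i => by ring
    rw [hPeq]
    field_simp
  rw [hval] at hmain
  refine hmain.congr' ?_
  filter_upwards [eventually_ge_atTop x] with n hxn
  rw [hBinomEq n hxn]
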